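/- Let p > 3 be a prime and F a field of characteristic p equipped with a discrete valuation v : F → ℤ ∪ {∞}. Let a₄, a₆ ∈ F with v(a₄) ≥ 0 and v(a₆) ≥ 0, let ι ≥ 1 be an integer, and let x, y ∈ F satisfy y² = x³ + a₄·x + a₆ with v(x) = −2ι and v(y) = −3ι. With A, M as in the Hasse invariant decomposition of (X³ + a₄X + a₆)^((p−1)/2) evaluated at a₄, a₆, x, and ℘_A(z) = z^p − A·z, one has v( y·M(x) − ℘_A((3x² + 2a₄)/(3y)) ) ≥ ι. -/

import Mathlib

section Aux
variable {F : Type*} [Field F] (v : F → WithTop ℤ)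
  (hv0 : ∀ a, v a = ⊤ ↔ a = 0)
  (hvmul : ∀ a b, v (a * b) = v a + v b)
  (hvadd : ∀ a b, min (v a) (v b) ≤ v (a + b))
set_option linter.unusedSectionVars false
include hv0 hvmul hvadd

lemma aux_v_one : v 1 = 0 := by
  have h := hvmul 1 1
  rw [mul_one] at h
  have hne : v 1 ≠ ⊤ := by simp [hv0]
  lift v 1 to ℤ using hne with c hc
  rw [← WithTop.coe_add, WithTop.coe_eq_coe] at h
  norm_cast
  omega

lemma aux_v_neg (a : F) : v (-a) = v a := by
  have h1 : v ((-1 : F)) = 0 := by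
    have h := hvmul (-1) (-1)
    rw [neg_mul_neg, one_mul, aux_v_one v hv0 hvmul hvadd] at h
    have hne : v (-1 : F) ≠ ⊤ := by simp [hv0]
    lift v (-1 : F) to ℤ using hne with c hc
    rw [← WithTop.coe_add] at h
    norm_cast at h ⊢
    omega
  calc v (-a) = v ((-1) * a) := by rw [neg_one_mul]
  _ = v (-1 : F) + v a := hvmul _ _
  _ = v a := by rw [h1, zero_add]

lemma aux_v_sub (a b : F) : min (v a) (v b) ≤ v (a - b) := by
  rw [sub_eq_add_neg]
  have := hvadd a (-b)
  rwa [aux_v_neg v hv0 hvmul hvadd] at this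

lemma aux_v_pow_nonneg (a : F) (h : 0 ≤ v a) (n : ℕ) : 0 ≤ v (a ^ n) := by
  induction n with
  | zero => simp [aux_v_one v hv0 hvmul hvadd]
  | succ n ih =>
    rw [pow_succ, hvmul]
    exact add_nonneg ih h

lemma aux_v_nat (n : ℕ) : 0 ≤ v ((n : F)) := by
  induction n with
  | zero => simp [(hv0 0).2 rfl]
  | succ n ih =>
    push_cast
    calc (0 : WithTop ℤ) ≤ min (v (n : F)) (v (1 : F)) := by
          simp [aux_v_one v hv0 hvmul hvadd, ih]
    _ ≤ v ((n : F) + 1) := hvadd _ _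

lemma aux_v_sum {α : Type*} (s : Finset α) (f : α → F) (c : WithTop ℤ)
    (h : ∀ i ∈ s, c ≤ v (f i)) : c ≤ v (∑ i ∈ s, f i) := by
  classical
  induction s using Finset.cons_induction with
  | empty => simp [(hv0 0).2 rfl]
  | cons a s ha ih =>
    rw [Finset.sum_cons]
    refine le_trans (le_min (h a (Finset.mem_cons_self a s)) ?_) (hvadd _ _)
    exact ih fun i hi => h i (Finset.mem_cons_of_mem hi)

lemma aux_v_pow (a : F) (c : ℤ) (h : v a = (c : WithTop ℤ)) (n : ℕ) :
    v (a ^ n) = (((n : ℤ) * c : ℤ) : WithTop ℤ) := by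
  induction n with
  | zero => simp [aux_v_one v hv0 hvmul hvadd]
  | succ n ih =>
    rw [pow_succ, hvmul, ih, h, ← WithTop.coe_add]
    congr 1
    push_cast
    ring

lemma aux_v_inv (a : F) (ha : a ≠ 0) (c : ℤ) (h : v a = (c : WithTop ℤ)) :
    v a⁻¹ = ((-c : ℤ) : WithTop ℤ) := by
  have h1 : v (a * a⁻¹) = 0 := by rw [mul_inv_cancel₀ ha, aux_v_one v hv0 hvmul hvadd]
  rw [hvmul, h] at h1
  have hne : v a⁻¹ ≠ ⊤ := by simp [hv0, ha]
  lift v a⁻¹ to ℤ using hne with d hd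
  rw [← WithTop.coe_add] at h1
  norm_cast at h1 ⊢
  omega

end Aux

theorem stmt_4 (p : ℕ) (hp : p.Prime) (hp3 : 3 < p)
    (F : Type*) [Field F] [CharP F p]
    (v : F → WithTop ℤ)
    (hv0 : ∀ a, v a = ⊤ ↔ a = 0)
    (hvmul : ∀ a b, v (a * b) = v a + v b)
    (hvadd : ∀ a b, min (v a) (v b) ≤ v (a + b))
    (a₄ a₆ : F) (ha₄ : 0 ≤ v a₄) (ha₆ : 0 ≤ v a₆)
    (ι : ℤ) (hι : 1 ≤ ι)
    (x y : F) (hcurve : y ^ 2 = x ^ 3 + a₄ * x + a₆)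
    (hvx : v x = ((-2 * ι : ℤ) : WithTop ℤ)) (hvy : v y = ((-3 * ι : ℤ) : WithTop ℤ)) :
    let P : Polynomial F :=
      (Polynomial.X ^ 3 + Polynomial.C a₄ * Polynomial.X + Polynomial.C a₆) ^ ((p - 1) / 2)
    let A : F := P.coeff (p - 1)
    let M : Polynomial F := Polynomial.divByMonic P (Polynomial.X ^ p)
    let wA : F → F := fun z => z ^ p - A * z
    ((ι : ℤ) : WithTop ℤ) ≤ v (y * M.eval x - wA ((3 * x ^ 2 + 2 * a₄) / (3 * y))) := by
  intro P A M wA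
  haveI := Fact.mk hp
  classical
  -- basic nonvanishing
  have hx0 : x ≠ 0 := by
    intro h
    rw [(hv0 x).2 h] at hvx
    exact (WithTop.top_ne_coe).elim hvx
  have hy0 : y ≠ 0 := by
    intro h
    rw [(hv0 y).2 h] at hvy
    exact (WithTop.top_ne_coe).elim hvy
  have h30 : (3 : F) ≠ 0 := by
    intro h
    have h3 : ((3 : ℕ) : F) = 0 := by push_cast; exact h
    have := (CharP.cast_eq_zero_iff F p 3).mp h3
    have := Nat.le_of_dvd (by norm_num) this
    omega
  -- v 3 = 0
  have hv3ge : 0 ≤ v (3 : F) := by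
    have := aux_v_nat v hv0 hvmul hvadd 3
    simpa using this
  have hfrob : (3 : F) ^ p = 3 := by
    have h := map_natCast (frobenius F p) 3
    simpa [frobenius_def] using h
  have h3p1 : (3 : F) ^ (p - 1) = 1 := by
    have hps : p - 1 + 1 = p := Nat.succ_pred_eq_of_pos hp.pos
    have h : (3 : F) ^ (p - 1) * 3 = 1 * 3 := by
      rw [one_mul, ← pow_succ, hps, hfrob]
    exact mul_right_cancel₀ h30 h
  have h3inv : (3 : F)⁻¹ = (3 : F) ^ (p - 2) := by
    refine inv_eq_of_mul_eq_one_right ?_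
    rw [mul_comm, ← pow_succ, show p - 2 + 1 = p - 1 by omega, h3p1]
  have hv3 : v (3 : F) = 0 := by
    have h1 : v (3 : F) + v (3 : F)⁻¹ = 0 := by
      rw [← hvmul, mul_inv_cancel₀ h30, aux_v_one v hv0 hvmul hvadd]
    have h2 : 0 ≤ v (3 : F)⁻¹ := by
      rw [h3inv]; exact aux_v_pow_nonneg v hv0 hvmul hvadd _ hv3ge _
    have h3 : v (3 : F) ≤ 0 := by
      calc v (3 : F) = v (3 : F) + 0 := (add_zero _).symm
      _ ≤ v (3 : F) + v (3 : F)⁻¹ := add_le_add le_rfl h2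
      _ = 0 := h1
    exact le_antisymm h3 hv3ge
  -- coefficients of P have nonnegative valuation
  have hvaddO : ∀ a b : F, 0 ≤ v a → 0 ≤ v b → 0 ≤ v (a + b) :=
    fun a b ha hb => le_trans (le_min ha hb) (hvadd a b)
  have hvmulO : ∀ a b : F, 0 ≤ v a → 0 ≤ v b → 0 ≤ v (a * b) :=
    fun a b ha hb => by rw [hvmul]; exact add_nonneg ha hb
  have good_mul : ∀ f g : Polynomial F, (∀ i, 0 ≤ v (f.coeff i)) →
      (∀ i, 0 ≤ v (g.coeff i)) → ∀ i, 0 ≤ v ((f * g).coeff i) := by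
    intro f g hf hg i
    rw [Polynomial.coeff_mul]
    exact aux_v_sum v hv0 hvmul hvadd _ _ _ (fun j _ => hvmulO _ _ (hf _) (hg _))
  have good_base : ∀ i, 0 ≤ v ((Polynomial.X ^ 3 + Polynomial.C a₄ * Polynomial.X +
      Polynomial.C a₆ : Polynomial F).coeff i) := by
    intro i
    simp only [Polynomial.coeff_add, Polynomial.coeff_X_pow, Polynomial.coeff_C_mul,
      Polynomial.coeff_X, Polynomial.coeff_C]
    apply hvaddO
    apply hvaddO
    · split_ifs <;> simp [aux_v_one v hv0 hvmul hvadd, (hv0 0).2 rfl]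
    · split_ifs <;> simp [mul_one, mul_zero, (hv0 0).2 rfl, ha₄]
    · split_ifs <;> simp [(hv0 0).2 rfl, ha₆]
  have goodP : ∀ i, 0 ≤ v (P.coeff i) := by
    show ∀ i, 0 ≤ v (((Polynomial.X ^ 3 + Polynomial.C a₄ * Polynomial.X +
      Polynomial.C a₆ : Polynomial F) ^ ((p - 1) / 2)).coeff i)
    generalize (p - 1) / 2 = n
    induction n with
    | zero =>
      intro i
      simp only [pow_zero, Polynomial.coeff_one]
      split_ifs <;> simp [aux_v_one v hv0 hvmul hvadd, (hv0 0).2 rfl]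
    | succ n ih =>
      intro i
      rw [pow_succ]
      exact good_mul _ _ ih good_base i
  have hA : 0 ≤ v A := goodP (p - 1)
  -- decomposition P = R + X^p * M
  have hmonic : (Polynomial.X ^ p : Polynomial F).Monic := Polynomial.monic_X_pow p
  set R : Polynomial F := P %ₘ (Polynomial.X ^ p) with hRdef
  have hdecomp : P = R + Polynomial.X ^ p * M := (Polynomial.modByMonic_add_div P (Polynomial.X ^ p)).symm
  have hRdeg : R.degree < (p : ℕ) := by
    have := Polynomial.degree_modByMonic_lt P hmonic
    simpa [Polynomial.degree_X_pow] using this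
  have hRcoeff_lt : ∀ i, i < p → R.coeff i = P.coeff i := by
    intro i hi
    have h := congrArg (fun q => Polynomial.coeff q i) hdecomp
    simp only [Polynomial.coeff_add] at h
    rw [mul_comm, Polynomial.coeff_mul_X_pow'] at h
    rw [if_neg (by omega)] at h
    simpa using h.symm
  have hRcoeff_ge : ∀ i, p ≤ i → R.coeff i = 0 := by
    intro i hi
    refine Polynomial.coeff_eq_zero_of_degree_lt (lt_of_lt_of_le hRdeg ?_)
    exact_mod_cast hi
  -- the polynomial L
  set L : Polynomial F := R - Polynomial.C A * Polynomial.X ^ (p - 1) with hLdef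
  have hLcoeff : ∀ i, L.coeff i = R.coeff i - A * (if i = p - 1 then 1 else 0) := by
    intro i
    simp [hLdef, Polynomial.coeff_sub, Polynomial.coeff_C_mul, Polynomial.coeff_X_pow]
  have hLhigh : ∀ i, p - 1 ≤ i → L.coeff i = 0 := by
    intro i hi
    rcases eq_or_lt_of_le hi with h | h
    · rw [hLcoeff, ← h, if_pos rfl, hRcoeff_lt _ (by omega), mul_one]
      exact sub_self _
    · rw [hLcoeff, if_neg (by omega), mul_zero, sub_zero, hRcoeff_ge _ (by omega)]
  have goodL : ∀ i, 0 ≤ v (L.coeff i) := by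
    intro i
    rw [hLcoeff]
    refine le_trans (le_min ?_ ?_) (aux_v_sub v hv0 hvmul hvadd _ _)
    · by_cases h : i < p
      · rw [hRcoeff_lt _ h]; exact goodP i
      · rw [hRcoeff_ge _ (by omega)]; simp [(hv0 0).2 rfl]
    · split_ifs with h
      · rw [mul_one]; exact hA
      · rw [mul_zero]; simp [(hv0 0).2 rfl]
  -- evaluation identities
  have hPx : P.eval x = y ^ (p - 1) := by
    have hodd : p - 1 = 2 * ((p - 1) / 2) := by
      obtain ⟨k, hk⟩ := hp.odd_of_ne_two (by omega)
      omega
    calc P.eval x = (x ^ 3 + a₄ * x + a₆) ^ ((p - 1) / 2) := by simp [P]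
    _ = (y ^ 2) ^ ((p - 1) / 2) := by rw [hcurve]
    _ = y ^ (p - 1) := by rw [← pow_mul, ← hodd]
  have heval : y ^ (p - 1) = R.eval x + x ^ p * M.eval x := by
    have h := congrArg (Polynomial.eval x) hdecomp
    simpa [hPx] using h
  have hLx : L.eval x = R.eval x - A * x ^ (p - 1) := by
    simp [hLdef]
  -- the key algebraic identity
  set t : F := (3 * x ^ 2 + 2 * a₄) / (3 * y) with htdef
  set u : F := y / x - t with hudef
  have hxp0 : x ^ p ≠ 0 := pow_ne_zero _ hx0
  have hu2 : u = (a₄ * x + 3 * a₆) / (3 * x * y) := by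
    rw [hudef, htdef]
    field_simp
    linear_combination 3 * hcurve
  have hMx : M.eval x = (y ^ (p - 1) - A * x ^ (p - 1) - L.eval x) / x ^ p := by
    rw [eq_div_iff hxp0, hLx]
    linear_combination -heval
  have hyM : y * M.eval x = (y / x) ^ p - A * (y / x) - y * L.eval x / x ^ p := by
    rw [hMx, div_pow]
    have hyp : y ^ p = y ^ (p - 1) * y := by
      conv_lhs => rw [show p = (p - 1) + 1 by omega]
      rw [pow_succ]
    have hxp : x ^ p = x ^ (p - 1) * x := by
      conv_lhs => rw [show p = (p - 1) + 1 by omega]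
      rw [pow_succ]
    field_simp
    rw [hyp, hxp]
    ring
  have hsub : u ^ p = (y / x) ^ p - t ^ p := by
    rw [hudef]
    exact sub_pow_expChar _ _
  have key : y * M.eval x - (t ^ p - A * t) = u ^ p - A * u - y * L.eval x / x ^ p := by
    rw [hyM, hsub, hudef]
    ring
  -- valuation of u
  have hxy30 : (3 : F) * x * y ≠ 0 := mul_ne_zero (mul_ne_zero h30 hx0) hy0
  have hvxy3 : v ((3 : F) * x * y) = ((-5 * ι : ℤ) : WithTop ℤ) := by
    rw [hvmul, hvmul, hv3, hvx, hvy, zero_add, ← WithTop.coe_add]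
    congr 1
    ring
  have hvinv3 : v (((3 : F) * x * y)⁻¹) = ((5 * ι : ℤ) : WithTop ℤ) := by
    have := aux_v_inv v hv0 hvmul hvadd _ hxy30 _ hvxy3
    rw [this]
    congr 1
    ring
  have hnum : ((-2 * ι : ℤ) : WithTop ℤ) ≤ v (a₄ * x + 3 * a₆) := by
    refine le_trans (le_min ?_ ?_) (hvadd _ _)
    · rw [hvmul, hvx]
      calc ((-2 * ι : ℤ) : WithTop ℤ) = 0 + ((-2 * ι : ℤ) : WithTop ℤ) := (zero_add _).symm
      _ ≤ v a₄ + ((-2 * ι : ℤ) : WithTop ℤ) := add_le_add ha₄ le_rfl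
    · rw [hvmul, hv3, zero_add]
      calc ((-2 * ι : ℤ) : WithTop ℤ) ≤ 0 := by
            rw [show (0 : WithTop ℤ) = ((0 : ℤ) : WithTop ℤ) from rfl]
            exact_mod_cast (by omega : (-2 * ι : ℤ) ≤ 0)
      _ ≤ v a₆ := ha₆
  have hvu : ((3 * ι : ℤ) : WithTop ℤ) ≤ v u := by
    rw [hu2, div_eq_mul_inv, hvmul, hvinv3]
    calc ((3 * ι : ℤ) : WithTop ℤ) = ((-2 * ι : ℤ) : WithTop ℤ) + ((5 * ι : ℤ) : WithTop ℤ) := by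
          rw [← WithTop.coe_add]; congr 1; ring
    _ ≤ v (a₄ * x + 3 * a₆) + ((5 * ι : ℤ) : WithTop ℤ) := add_le_add hnum le_rfl
  have hvu0 : 0 ≤ v u := by
    refine le_trans ?_ hvu
    rw [show (0 : WithTop ℤ) = ((0 : ℤ) : WithTop ℤ) from rfl]
    exact_mod_cast (by omega : (0 : ℤ) ≤ 3 * ι)
  -- three bounds
  have h1 : ((ι : ℤ) : WithTop ℤ) ≤ v (u ^ p) := by
    have hsplit : v (u ^ p) = v u + v (u ^ (p - 1)) := by
      conv_lhs => rw [show p = 1 + (p - 1) by omega]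
      rw [pow_add, pow_one, hvmul]
    rw [hsplit]
    calc ((ι : ℤ) : WithTop ℤ) ≤ ((3 * ι : ℤ) : WithTop ℤ) + 0 := by
          rw [add_zero]; exact_mod_cast (by omega : ι ≤ 3 * ι)
    _ ≤ v u + v (u ^ (p - 1)) :=
        add_le_add hvu (aux_v_pow_nonneg v hv0 hvmul hvadd _ hvu0 _)
  have h2 : ((ι : ℤ) : WithTop ℤ) ≤ v (A * u) := by
    rw [hvmul]
    calc ((ι : ℤ) : WithTop ℤ) ≤ 0 + ((3 * ι : ℤ) : WithTop ℤ) := by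
          rw [zero_add]; exact_mod_cast (by omega : ι ≤ 3 * ι)
    _ ≤ v A + v u := add_le_add hA hvu
  have hvLx : (((-2) * ((p : ℤ) - 2) * ι : ℤ) : WithTop ℤ) ≤ v (L.eval x) := by
    rw [Polynomial.eval_eq_sum_range]
    refine aux_v_sum v hv0 hvmul hvadd _ _ _ ?_
    intro i _
    by_cases hi : i ≤ p - 2
    · rw [hvmul, aux_v_pow v hv0 hvmul hvadd x _ hvx i]
      have hile : (i : ℤ) ≤ (p : ℤ) - 2 := by
        have : (i : ℤ) ≤ ((p - 2 : ℕ) : ℤ) := by exact_mod_cast hi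
        omega
      calc (((-2) * ((p : ℤ) - 2) * ι : ℤ) : WithTop ℤ)
          ≤ 0 + (((i : ℤ) * (-2 * ι) : ℤ) : WithTop ℤ) := by
            rw [zero_add]
            exact_mod_cast (by nlinarith : ((-2) * ((p : ℤ) - 2) * ι : ℤ) ≤ (i : ℤ) * (-2 * ι))
      _ ≤ v (L.coeff i) + (((i : ℤ) * (-2 * ι) : ℤ) : WithTop ℤ) :=
            add_le_add (goodL i) le_rfl
    · rw [hLhigh i (by omega), zero_mul, (hv0 0).2 rfl]
      exact le_top
  have hvxpinv : v ((x ^ p)⁻¹) = ((2 * (p : ℤ) * ι : ℤ) : WithTop ℤ) := by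
    have hxp := aux_v_pow v hv0 hvmul hvadd x _ hvx p
    have := aux_v_inv v hv0 hvmul hvadd _ hxp0 _ hxp
    rw [this]
    congr 1
    ring
  have h3 : ((ι : ℤ) : WithTop ℤ) ≤ v (y * L.eval x / x ^ p) := by
    rw [div_eq_mul_inv, hvmul, hvmul, hvy, hvxpinv]
    calc ((ι : ℤ) : WithTop ℤ)
        = ((-3 * ι : ℤ) : WithTop ℤ) + (((-2) * ((p : ℤ) - 2) * ι : ℤ) : WithTop ℤ)
          + ((2 * (p : ℤ) * ι : ℤ) : WithTop ℤ) := by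
          rw [← WithTop.coe_add, ← WithTop.coe_add]; congr 1; ring
    _ ≤ ((-3 * ι : ℤ) : WithTop ℤ) + v (L.eval x) + ((2 * (p : ℤ) * ι : ℤ) : WithTop ℤ) :=
        add_le_add (add_le_add le_rfl hvLx) le_rfl
  -- conclusion
  have hgoal : y * M.eval x - wA t = u ^ p - A * u - y * L.eval x / x ^ p := key
  rw [hgoal]
  refine le_trans (le_min (le_trans (le_min h1 h2) (aux_v_sub v hv0 hvmul hvadd _ _)) h3)
    (aux_v_sub v hv0 hvmul hvadd _ _)
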